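/- (Proposition 2.2 (ii): boundedness.) There exists a constant C ≥ 0 (one may take C = 2 * α₂) such that for every f ∈ L²_M the family Q f belongs to L²_M and ‖Q f‖_M ≤ C * ‖f‖_M. -/

import Mathlib

open MeasureTheory Real

set_option maxHeartbeats 1000000

theorem stmt4
    (m ε : ℕ → ℝ)
    (hm : ∀ n, 0 < m n)
    (hε : Summable fun n => Real.exp (-ε n))
    (Z : ℝ) (hZ : Z = ∑' n, Real.exp (-ε n))
    (M : ℕ → ℝ → ℝ)
    (hM : ∀ n p, M n p =
      Real.exp (-(p ^ 2 / (2 * m n) + ε n)) / (Real.sqrt (2 * Real.pi * m n) * Z))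
    (hMnorm : (∑' n, ∫ p, M n p) = 1)
    (α : ℕ → ℕ → ℝ → ℝ → ℝ)
    (hαmeas : ∀ n n', Measurable fun q : ℝ × ℝ => α n n' q.1 q.2)
    (α₁ α₂ : ℝ) (hα₁ : 0 < α₁) (hα₁₂ : α₁ ≤ α₂)
    (hsym : ∀ n n' p p', α n n' p p' = α n' n p' p)
    (hbd : ∀ n n' p p', α₁ ≤ α n n' p p' ∧ α n n' p p' ≤ α₂)
    (Q : (ℕ → ℝ → ℝ) → ℕ → ℝ → ℝ)
    (hQ : ∀ f n p, Q f n p =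
      ∑' n', ∫ p', α n n' p p' * (M n p * f n' p' - M n' p' * f n p))
    (memL2M : (ℕ → ℝ → ℝ) → Prop)
    (hmem : ∀ f, memL2M f ↔ (∀ n, Measurable (f n)) ∧
      (∀ n, Integrable fun p => f n p ^ 2 / M n p) ∧
      (Summable fun n => ∫ p, f n p ^ 2 / M n p))
    (nrm : (ℕ → ℝ → ℝ) → ℝ)
    (hnrm : ∀ f, nrm f = (∑' n, ∫ p, f n p ^ 2 / M n p) ^ ((1 : ℝ) / 2)) :
    ∃ C : ℝ, C = 2 * α₂ ∧ 0 ≤ C ∧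
      ∀ f, memL2M f → memL2M (Q f) ∧ nrm (Q f) ≤ C * nrm f := by
  have hα₂ : 0 < α₂ := lt_of_lt_of_le hα₁ hα₁₂
  -- basic facts about M
  have hZpos : 0 < Z := by
    rw [hZ]
    exact Summable.tsum_pos hε (fun n => (Real.exp_pos _).le) 0 (Real.exp_pos _)
  have hsq : ∀ n, 0 < Real.sqrt (2 * Real.pi * m n) := by
    intro n; have := hm n; have := Real.pi_pos
    exact Real.sqrt_pos.mpr (by positivity)
  have hMpos : ∀ n p, 0 < M n p := by
    intro n p; rw [hM]
    exact div_pos (Real.exp_pos _) (mul_pos (hsq n) hZpos)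
  have hM' : ∀ n p, M n p =
      (Real.exp (-ε n) / (Real.sqrt (2 * Real.pi * m n) * Z)) *
        Real.exp (-(1 / (2 * m n)) * p ^ 2) := by
    intro n p
    have hmn := (hm n).ne'
    rw [hM, show -(p ^ 2 / (2 * m n) + ε n) = (-(1 / (2 * m n)) * p ^ 2) + (-ε n) by
      field_simp; ring, Real.exp_add]
    ring
  have hb : ∀ n, (0:ℝ) < 1 / (2 * m n) := by intro n; have := hm n; positivity
  have hMint : ∀ n, Integrable (M n) := by
    intro n
    have := (integrable_exp_neg_mul_sq (hb n)).const_mul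
      (Real.exp (-ε n) / (Real.sqrt (2 * Real.pi * m n) * Z))
    exact this.congr (ae_of_all _ fun p => (hM' n p).symm)
  have hMmeas : ∀ n, Measurable (M n) := by
    intro n
    have he : M n = fun p =>
        (Real.exp (-ε n) / (Real.sqrt (2 * Real.pi * m n) * Z)) *
          Real.exp (-(1 / (2 * m n)) * p ^ 2) := funext (hM' n)
    rw [he]; fun_prop
  have hIM : ∀ n, ∫ p, M n p = Real.exp (-ε n) / Z := by
    intro n
    have : ∫ p, M n p = (Real.exp (-ε n) / (Real.sqrt (2 * Real.pi * m n) * Z)) *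
        ∫ p, Real.exp (-(1 / (2 * m n)) * p ^ 2) := by
      rw [← integral_const_mul]
      exact integral_congr_ae (ae_of_all _ fun p => hM' n p)
    rw [this, integral_gaussian]
    have h2 : Real.pi / (1 / (2 * m n)) = 2 * Real.pi * m n := by
      field_simp [(hm n).ne']
    rw [h2, div_mul_eq_mul_div, mul_comm (Real.sqrt (2 * Real.pi * m n)) Z,
      mul_div_mul_right _ _ (hsq n).ne']
  have hIMsum : Summable fun n => ∫ p, M n p := by
    simp_rw [hIM]; exact hε.div_const Z
  have hIMnonneg : ∀ n, 0 ≤ ∫ p, M n p :=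
    fun n => integral_nonneg fun p => (hMpos n p).le
  refine ⟨2 * α₂, rfl, by positivity, ?_⟩
  intro f hf
  obtain ⟨hfm, hfi2, hfs⟩ := (hmem f).mp hf
  -- notation
  set G : ℕ → ℝ := fun n => ∫ p, f n p ^ 2 / M n p with hGdef
  set S : ℝ := ∑' n, G n with hSdef
  have hGnn : ∀ n, 0 ≤ G n := fun n =>
    integral_nonneg fun p => div_nonneg (sq_nonneg _) (hMpos n p).le
  have hSnn : 0 ≤ S := tsum_nonneg hGnn
  -- AM-GM pointwise bound on |f|
  have habs : ∀ c : ℝ, 0 < c → ∀ n p,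
      |f n p| ≤ (c * (f n p ^ 2 / M n p) + M n p / c) / 2 := by
    intro c hc n p
    have hMp := hMpos n p
    rw [le_div_iff₀ (by norm_num : (0:ℝ) < 2)]
    have h2 : c * (f n p ^ 2 / M n p) + M n p / c =
        (c ^ 2 * f n p ^ 2 + M n p ^ 2) / (c * M n p) := by
      field_simp
    rw [h2, le_div_iff₀ (mul_pos hc hMp)]
    nlinarith [sq_nonneg (c * |f n p| - M n p), sq_abs (f n p), abs_nonneg (f n p)]
  -- integrability of f and |f|
  have hfint : ∀ n, Integrable (f n) := by
    intro n
    refine Integrable.mono' (((hfi2 n).add (hMint n)).div_const 2)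
      (hfm n).aestronglyMeasurable (ae_of_all _ fun p => ?_)
    rw [Real.norm_eq_abs]
    have := habs 1 one_pos n p
    simpa using this
  -- bound on ∫ |f n|
  have hAbd : ∀ c : ℝ, 0 < c → ∀ n,
      (∫ p, |f n p|) ≤ (c * G n + (∫ p, M n p) / c) / 2 := by
    intro c hc n
    have h1 : (∫ p, |f n p|) ≤ ∫ p, (c * (f n p ^ 2 / M n p) + M n p / c) / 2 :=
      integral_mono (hfint n).abs
        ((((hfi2 n).const_mul c).add ((hMint n).div_const c)).div_const 2)
        (fun p => habs c hc n p)
    calc (∫ p, |f n p|) ≤ ∫ p, (c * (f n p ^ 2 / M n p) + M n p / c) / 2 := h1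
      _ = (c * G n + (∫ p, M n p) / c) / 2 := by
        rw [integral_div, integral_add ((hfi2 n).const_mul c) ((hMint n).div_const c),
          integral_const_mul, integral_div]
  have hAnn : ∀ n, 0 ≤ ∫ p, |f n p| := fun n => integral_nonneg fun p => abs_nonneg _
  have hAsum : Summable fun n => ∫ p, |f n p| := by
    refine Summable.of_nonneg_of_le hAnn (fun n => by simpa using hAbd 1 one_pos n) ?_
    simpa using ((hfs.mul_left 1).add (hIMsum.div_const 1)).div_const 2
  set K : ℝ := ∑' n, ∫ p, |f n p| with hKdef
  have hKnn : 0 ≤ K := tsum_nonneg hAnn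
  have hKbd : ∀ c : ℝ, 0 < c → K ≤ (c * S + 1 / c) / 2 := by
    intro c hc
    have hsum1 : Summable fun n => c * G n := hfs.mul_left c
    have hsum2 : Summable fun n => (∫ p, M n p) / c := hIMsum.div_const c
    calc K ≤ ∑' n, (c * G n + (∫ p, M n p) / c) / 2 :=
          Summable.tsum_le_tsum (fun n => hAbd c hc n) hAsum ((hsum1.add hsum2).div_const 2)
      _ = (c * S + 1 / c) / 2 := by
        rw [tsum_div_const, Summable.tsum_add hsum1 hsum2, tsum_mul_left, tsum_div_const, hMnorm]
  have hKS : K ≤ Real.sqrt S := by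
    rcases eq_or_lt_of_le hSnn with hS0 | hSpos
    · rw [← hS0, Real.sqrt_zero]
      refine le_of_forall_pos_le_add (fun e he => ?_)
      have := hKbd (1 / (2 * e)) (by positivity)
      rw [← hS0] at this
      calc K ≤ ((1 / (2 * e)) * 0 + 1 / (1 / (2 * e))) / 2 := this
        _ = e := by field_simp; ring
        _ ≤ 0 + e := by linarith
    · have hs := Real.sqrt_pos.mpr hSpos
      have := hKbd (1 / Real.sqrt S) (by positivity)
      calc K ≤ ((1 / Real.sqrt S) * S + 1 / (1 / Real.sqrt S)) / 2 := this
        _ = Real.sqrt S := by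
          rw [one_div_one_div, one_div_mul_eq_div, Real.div_sqrt]
          ring
  -- pointwise bound on Q
  have hαabs : ∀ n n' p p', |α n n' p p'| = α n n' p p' := fun n n' p p' =>
    abs_of_pos (lt_of_lt_of_le hα₁ (hbd n n' p p').1)
  have hgb : ∀ n n' p, |∫ p', α n n' p p' * (M n p * f n' p' - M n' p' * f n p)| ≤
      α₂ * (M n p * (∫ p', |f n' p'|) + (∫ p', M n' p') * |f n p|) := by
    intro n n' p
    have hint : Integrable (fun p' => α₂ * (M n p * |f n' p'| + M n' p' * |f n p|)) :=
      (((hfint n').abs.const_mul (M n p)).add ((hMint n').mul_const (|f n p|))).const_mul α₂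
    calc |∫ p', α n n' p p' * (M n p * f n' p' - M n' p' * f n p)|
        ≤ ∫ p', |α n n' p p' * (M n p * f n' p' - M n' p' * f n p)| := by
          have h := norm_integral_le_integral_norm (μ := volume)
            (fun p' => α n n' p p' * (M n p * f n' p' - M n' p' * f n p))
          simp only [Real.norm_eq_abs] at h
          exact h
      _ ≤ ∫ p', α₂ * (M n p * |f n' p'| + M n' p' * |f n p|) := by
          refine integral_mono_of_nonneg (ae_of_all _ fun p' => abs_nonneg _) hint
            (ae_of_all _ fun p' => ?_)
          show |α n n' p p' * (M n p * f n' p' - M n' p' * f n p)| ≤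
            α₂ * (M n p * |f n' p'| + M n' p' * |f n p|)
          rw [abs_mul, hαabs]
          have h1 : |M n p * f n' p' - M n' p' * f n p| ≤
              M n p * |f n' p'| + M n' p' * |f n p| := by
            calc |M n p * f n' p' - M n' p' * f n p|
                ≤ |M n p * f n' p'| + |M n' p' * f n p| := abs_sub _ _
              _ = M n p * |f n' p'| + M n' p' * |f n p| := by
                rw [abs_mul, abs_mul, abs_of_pos (hMpos n p), abs_of_pos (hMpos n' p')]
          exact mul_le_mul (hbd n n' p p').2 h1 (abs_nonneg _) hα₂.le
      _ = α₂ * (M n p * (∫ p', |f n' p'|) + (∫ p', M n' p') * |f n p|) := by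
          rw [integral_const_mul, integral_add ((hfint n').abs.const_mul (M n p))
            ((hMint n').mul_const (|f n p|)), integral_const_mul, integral_mul_const]
  have hbsum : ∀ n p, Summable fun n' =>
      α₂ * (M n p * (∫ p', |f n' p'|) + (∫ p', M n' p') * |f n p|) :=
    fun n p => ((hAsum.mul_left (M n p)).add (hIMsum.mul_right (|f n p|))).mul_left α₂
  have hgabs : ∀ n p, Summable fun n' =>
      |∫ p', α n n' p p' * (M n p * f n' p' - M n' p' * f n p)| :=
    fun n p => Summable.of_nonneg_of_le (fun _ => abs_nonneg _)
      (fun n' => hgb n n' p) (hbsum n p)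
  have hgsum : ∀ n p, Summable fun n' =>
      ∫ p', α n n' p p' * (M n p * f n' p' - M n' p' * f n p) :=
    fun n p => Summable.of_norm_bounded (hbsum n p) (fun n' => by
      simpa [Real.norm_eq_abs] using hgb n n' p)
  have hQb : ∀ n p, |Q f n p| ≤ α₂ * (M n p * K + |f n p|) := by
    intro n p
    rw [hQ]
    calc |∑' n', ∫ p', α n n' p p' * (M n p * f n' p' - M n' p' * f n p)|
        ≤ ∑' n', |∫ p', α n n' p p' * (M n p * f n' p' - M n' p' * f n p)| := by
          have habs' : Summable fun n' =>
              ‖∫ p', α n n' p p' * (M n p * f n' p' - M n' p' * f n p)‖ := by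
            simpa only [Real.norm_eq_abs] using hgabs n p
          have h := norm_tsum_le_tsum_norm habs'
          simp only [Real.norm_eq_abs] at h
          exact h
      _ ≤ ∑' n', α₂ * (M n p * (∫ p', |f n' p'|) + (∫ p', M n' p') * |f n p|) :=
          Summable.tsum_le_tsum (fun n' => hgb n n' p) (hgabs n p) (hbsum n p)
      _ = α₂ * (M n p * K + |f n p|) := by
          rw [tsum_mul_left, Summable.tsum_add (hAsum.mul_left (M n p)) (hIMsum.mul_right (|f n p|)),
            tsum_mul_left, tsum_mul_right, hMnorm, one_mul]
  -- measurability of Q f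
  have hFmeas : ∀ n n', Measurable fun p =>
      ∫ p', α n n' p p' * (M n p * f n' p' - M n' p' * f n p) := by
    intro n n'
    have hu : StronglyMeasurable fun q : ℝ × ℝ =>
        α n n' q.1 q.2 * (M n q.1 * f n' q.2 - M n' q.2 * f n q.1) :=
      ((hαmeas n n').mul ((((hMmeas n).comp measurable_fst).mul
        ((hfm n').comp measurable_snd)).sub (((hMmeas n').comp measurable_snd).mul
        ((hfm n).comp measurable_fst)))).stronglyMeasurable
    exact hu.integral_prod_right'.measurable
  have hQmeas : ∀ n, Measurable (Q f n) := by
    intro n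
    have heq : Q f n = fun p =>
        ∑' n', ∫ p', α n n' p p' * (M n p * f n' p' - M n' p' * f n p) :=
      funext fun p => hQ f n p
    rw [heq]
    refine measurable_of_tendsto_metrizable (f := fun k p =>
      ∑ n' ∈ Finset.range k, ∫ p', α n n' p p' * (M n p * f n' p' - M n' p' * f n p))
      (fun k => Finset.measurable_sum (Finset.range k) (fun n' _ => hFmeas n n')) ?_
    rw [tendsto_pi_nhds]
    intro p
    exact (hgsum n p).hasSum.tendsto_sum_nat
  -- pointwise bound on the quadratic form
  have hQptbd : ∀ n p, Q f n p ^ 2 / M n p ≤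
      α₂ ^ 2 * (K ^ 2 * M n p + 2 * K * |f n p| + f n p ^ 2 / M n p) := by
    intro n p
    have hMp := hMpos n p
    have hB : 0 ≤ α₂ * (M n p * K + |f n p|) := by
      have := abs_nonneg (f n p); positivity
    have h2 : Q f n p ^ 2 ≤ (α₂ * (M n p * K + |f n p|)) ^ 2 := by
      nlinarith [hQb n p, abs_nonneg (Q f n p), sq_abs (Q f n p), hB]
    rw [div_le_iff₀ hMp]
    have hexp : α₂ ^ 2 * (K ^ 2 * M n p + 2 * K * |f n p| + f n p ^ 2 / M n p) * M n p
        = α₂ ^ 2 * (K ^ 2 * M n p ^ 2 + 2 * K * |f n p| * M n p + f n p ^ 2) := by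
      field_simp
    rw [hexp]
    nlinarith [h2, sq_abs (f n p)]
  have hDint : ∀ n, Integrable (fun p =>
      α₂ ^ 2 * (K ^ 2 * M n p + 2 * K * |f n p| + f n p ^ 2 / M n p)) := by
    intro n
    exact ((((hMint n).const_mul (K ^ 2)).add ((hfint n).abs.const_mul (2 * K))).add
      (hfi2 n)).const_mul (α₂ ^ 2)
  have hQ2meas : ∀ n, Measurable fun p => Q f n p ^ 2 / M n p := fun n =>
    ((hQmeas n).pow_const 2).div (hMmeas n)
  have hQ2nonneg : ∀ n p, 0 ≤ Q f n p ^ 2 / M n p := fun n p =>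
    div_nonneg (sq_nonneg _) (hMpos n p).le
  have hQint2 : ∀ n, Integrable fun p => Q f n p ^ 2 / M n p := by
    intro n
    refine Integrable.mono' (hDint n) (hQ2meas n).aestronglyMeasurable
      (ae_of_all _ fun p => ?_)
    rw [Real.norm_eq_abs, abs_of_nonneg (hQ2nonneg n p)]
    exact hQptbd n p
  have hT : ∀ n, (∫ p, Q f n p ^ 2 / M n p) ≤
      α₂ ^ 2 * (K ^ 2 * (∫ p, M n p) + 2 * K * (∫ p, |f n p|) + G n) := by
    intro n
    calc (∫ p, Q f n p ^ 2 / M n p)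
        ≤ ∫ p, α₂ ^ 2 * (K ^ 2 * M n p + 2 * K * |f n p| + f n p ^ 2 / M n p) :=
          integral_mono (hQint2 n) (hDint n) (fun p => hQptbd n p)
      _ = α₂ ^ 2 * (K ^ 2 * (∫ p, M n p) + 2 * K * (∫ p, |f n p|) + G n) := by
          rw [integral_const_mul]
          congr 1
          calc ∫ p, (K ^ 2 * M n p + 2 * K * |f n p| + f n p ^ 2 / M n p)
              = (∫ p, K ^ 2 * M n p) + (∫ p, 2 * K * |f n p|) + ∫ p, f n p ^ 2 / M n p :=
                (integral_add (((hMint n).const_mul (K ^ 2)).add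
                  ((hfint n).abs.const_mul (2 * K))) (hfi2 n)).trans
                  (congrArg (· + ∫ p, f n p ^ 2 / M n p)
                    (integral_add ((hMint n).const_mul (K ^ 2))
                      ((hfint n).abs.const_mul (2 * K))))
            _ = K ^ 2 * (∫ p, M n p) + 2 * K * (∫ p, |f n p|) + G n := by
                rw [integral_const_mul, integral_const_mul]
  have hTnn : ∀ n, 0 ≤ ∫ p, Q f n p ^ 2 / M n p := fun n => integral_nonneg (hQ2nonneg n)
  have hboundsum : Summable fun n =>
      α₂ ^ 2 * (K ^ 2 * (∫ p, M n p) + 2 * K * (∫ p, |f n p|) + G n) :=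
    (((hIMsum.mul_left (K ^ 2)).add (hAsum.mul_left (2 * K))).add hfs).mul_left (α₂ ^ 2)
  have hTsum : Summable fun n => ∫ p, Q f n p ^ 2 / M n p :=
    Summable.of_nonneg_of_le hTnn hT hboundsum
  refine ⟨(hmem (Q f)).mpr ⟨hQmeas, hQint2, hTsum⟩, ?_⟩
  have hsum_le : (∑' n, ∫ p, Q f n p ^ 2 / M n p) ≤ (2 * α₂) ^ 2 * S := by
    have h1 : (∑' n, ∫ p, Q f n p ^ 2 / M n p) ≤
        ∑' n, α₂ ^ 2 * (K ^ 2 * (∫ p, M n p) + 2 * K * (∫ p, |f n p|) + G n) :=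
      Summable.tsum_le_tsum hT hTsum hboundsum
    have h2 : (∑' n, α₂ ^ 2 * (K ^ 2 * (∫ p, M n p) + 2 * K * (∫ p, |f n p|) + G n))
        = α₂ ^ 2 * (K ^ 2 * 1 + 2 * K * K + S) := by
      rw [tsum_mul_left, Summable.tsum_add ((hIMsum.mul_left (K ^ 2)).add (hAsum.mul_left (2 * K))) hfs,
        Summable.tsum_add (hIMsum.mul_left (K ^ 2)) (hAsum.mul_left (2 * K)),
        tsum_mul_left, tsum_mul_left, hMnorm]
    have hK2 : K ^ 2 ≤ S := by
      have h := pow_le_pow_left₀ hKnn hKS 2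
      rwa [Real.sq_sqrt hSnn] at h
    calc (∑' n, ∫ p, Q f n p ^ 2 / M n p)
        ≤ α₂ ^ 2 * (K ^ 2 * 1 + 2 * K * K + S) := by rw [← h2]; exact h1
      _ ≤ α₂ ^ 2 * (S + 2 * S + S) := by nlinarith [hK2, sq_nonneg α₂]
      _ = (2 * α₂) ^ 2 * S := by ring
  rw [hnrm, hnrm]
  have hSeq : (∑' n, ∫ p, f n p ^ 2 / M n p) = S := rfl
  rw [hSeq]
  calc (∑' n, ∫ p, Q f n p ^ 2 / M n p) ^ ((1:ℝ)/2)
      ≤ ((2 * α₂) ^ 2 * S) ^ ((1:ℝ)/2) :=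
        Real.rpow_le_rpow (tsum_nonneg hTnn) hsum_le (by norm_num)
    _ = 2 * α₂ * S ^ ((1:ℝ)/2) := by
        rw [Real.mul_rpow (by positivity) hSnn]
        congr 1
        rw [← Real.rpow_natCast (2 * α₂) 2, ← Real.rpow_mul (by positivity)]
        norm_num
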